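/- Let N be a positive integer with N ≡ 3 (mod 8). Then the number of pairs (c, d) of positive integers with N = c² + 2d² is congruent modulo 2 to σ₀(N)/2, where σ₀(N) denotes the number of positive divisors of N (note σ₀(N) is even since such N is not a perfect square). -/

import Mathlib

/-- The Zagier-style involution on triples `(x, y, z)` with `x² + 2yz = N`.
Its fixed points on the positive-odd solution set are exactly the triples with
`x = y`, which correspond to divisor pairs `a < b` of `N`. -/
private def zagMap (u : ℤ × ℤ × ℤ) : ℤ × ℤ × ℤ :=
  if 2*u.1 + 2*u.2.2 < u.2.1 then (u.1 + 2*u.2.2, u.2.2, u.2.1 - 2*u.1 - 2*u.2.2)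
  else if 2*u.2.1 < u.1 then (u.1 - 2*u.2.1, 2*u.1 - 2*u.2.1 + u.2.2, u.2.1)
  else if 2*u.2.1 < 2*u.1 + u.2.2 then (2*u.2.1 - u.1, u.2.1, 2*u.1 - 2*u.2.1 + u.2.2)
  else if 2*u.2.1 < 3*u.1 + 2*u.2.2 then
    (3*u.1 - 2*u.2.1 + 2*u.2.2, 2*u.1 - u.2.1 + 2*u.2.2, 2*u.2.1 - 2*u.1 - u.2.2)
  else (2*u.2.1 - 3*u.1 - 2*u.2.2, 2*u.2.1 - 2*u.1 - u.2.2, 2*u.1 - u.2.1 + 2*u.2.2)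

/-- Square of an odd integer is 1 mod 8. -/
private lemma odd_sq_mod_eight {x : ℤ} (hx : x % 2 = 1) : x ^ 2 % 8 = 1 := by
  obtain ⟨k, rfl⟩ : ∃ k, x = 2*k + 1 := ⟨x / 2, by omega⟩
  obtain ⟨m, hm⟩ := Int.even_mul_succ_self k
  have h : (2*k + 1) ^ 2 = 8*m + 1 := by linear_combination 4 * hm
  omega

/-- Parity of the cardinality of a finset carrying an involution equals parity of the
number of fixed points. -/
private lemma card_filter_parity {α : Type*} [DecidableEq α] (s : Finset α) (g : α → α)
    (hmem : ∀ a ∈ s, g a ∈ s) (hinv : ∀ a ∈ s, g (g a) = a) :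
    s.card % 2 = (s.filter fun a => g a = a).card % 2 := by
  classical
  have hsplit := Finset.card_filter_add_card_filter_not
    (s := s) (p := fun a => g a = a)
  have h0 : ((s.filter fun a => ¬ g a = a).sum fun _ => (1 : ZMod 2)) = 0 := by
    refine Finset.sum_involution (fun a _ => g a) (fun a ha => by decide) ?_ ?_ ?_
    · intro a ha _
      exact (Finset.mem_filter.mp ha).2
    · intro a ha
      have has := (Finset.mem_filter.mp ha).1
      refine Finset.mem_filter.mpr ⟨hmem a has, ?_⟩
      rw [hinv a has]
      exact fun hh => (Finset.mem_filter.mp ha).2 hh.symm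
    · intro a ha
      exact hinv a (Finset.mem_filter.mp ha).1
  rw [Finset.sum_const, nsmul_eq_mul, mul_one] at h0
  have h2 : (2 : ℕ) ∣ (s.filter fun a => ¬ g a = a).card :=
    (ZMod.natCast_eq_zero_iff _ 2).mp h0
  omega

private lemma odd_coords {x y z n : ℤ} (hq : x ^ 2 + 2 * y * z = n) (hn : n % 8 = 3) :
    x % 2 = 1 ∧ y % 2 = 1 ∧ z % 2 = 1 := by
  have hxodd : x % 2 = 1 := by
    rcases Int.even_or_odd x with he | ho
    · exfalso
      obtain ⟨k, hk⟩ := he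
      have h2 : n = 2 * (2 * k ^ 2 + y * z) := by rw [← hq, hk]; ring
      omega
    · exact Int.odd_iff.mp ho
  obtain ⟨t, ht⟩ : ∃ t, x ^ 2 = 8 * t + 1 :=
    ⟨x ^ 2 / 8, by have := odd_sq_mod_eight hxodd; omega⟩
  have hyzodd : (y * z) % 2 = 1 := by
    rcases Int.even_or_odd (y * z) with he | ho
    · exfalso
      obtain ⟨m, hm⟩ := he
      have h4 : n = 8 * t + 1 + 2 * (m + m) := by linear_combination -hq + ht + 2 * hm
      omega
    · exact Int.odd_iff.mp ho
  have hyz := Int.odd_mul.mp (Int.odd_iff.mpr hyzodd)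
  exact ⟨hxodd, Int.odd_iff.mp hyz.1, Int.odd_iff.mp hyz.2⟩

private lemma zag1 {x y z : ℤ} (h : 2*x + 2*z < y) :
    zagMap (x, y, z) = (x + 2*z, z, y - 2*x - 2*z) := by
  dsimp only [zagMap]; rw [if_pos h]

private lemma zag2 {x y z : ℤ} (h1 : ¬ 2*x + 2*z < y) (h2 : 2*y < x) :
    zagMap (x, y, z) = (x - 2*y, 2*x - 2*y + z, y) := by
  dsimp only [zagMap]; rw [if_neg h1, if_pos h2]

private lemma zag3 {x y z : ℤ} (h1 : ¬ 2*x + 2*z < y) (h2 : ¬ 2*y < x)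
    (h3 : 2*y < 2*x + z) : zagMap (x, y, z) = (2*y - x, y, 2*x - 2*y + z) := by
  dsimp only [zagMap]; rw [if_neg h1, if_neg h2, if_pos h3]

private lemma zag4 {x y z : ℤ} (h1 : ¬ 2*x + 2*z < y) (h2 : ¬ 2*y < x)
    (h3 : ¬ 2*y < 2*x + z) (h4 : 2*y < 3*x + 2*z) :
    zagMap (x, y, z) = (3*x - 2*y + 2*z, 2*x - y + 2*z, 2*y - 2*x - z) := by
  dsimp only [zagMap]; rw [if_neg h1, if_neg h2, if_neg h3, if_pos h4]

private lemma zag5 {x y z : ℤ} (h1 : ¬ 2*x + 2*z < y) (h2 : ¬ 2*y < x)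
    (h3 : ¬ 2*y < 2*x + z) (h4 : ¬ 2*y < 3*x + 2*z) :
    zagMap (x, y, z) = (2*y - 3*x - 2*z, 2*y - 2*x - z, 2*x - y + 2*z) := by
  dsimp only [zagMap]; rw [if_neg h1, if_neg h2, if_neg h3, if_neg h4]

private lemma zag_mem {x y z : ℤ} (hx1 : 1 ≤ x) (hy1 : 1 ≤ y) (hz1 : 1 ≤ z)
    (hxo : x % 2 = 1) (hyo : y % 2 = 1) (hzo : z % 2 = 1) :
    1 ≤ (zagMap (x, y, z)).1 ∧ 1 ≤ (zagMap (x, y, z)).2.1 ∧ 1 ≤ (zagMap (x, y, z)).2.2 ∧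
      (zagMap (x, y, z)).1 ^ 2 + 2 * (zagMap (x, y, z)).2.1 * (zagMap (x, y, z)).2.2
        = x ^ 2 + 2 * y * z := by
  by_cases h1 : 2*x + 2*z < y
  · rw [zag1 h1]; dsimp only; exact ⟨by omega, by omega, by omega, by ring⟩
  by_cases h2 : 2*y < x
  · rw [zag2 h1 h2]; dsimp only; exact ⟨by omega, by omega, by omega, by ring⟩
  by_cases h3 : 2*y < 2*x + z
  · rw [zag3 h1 h2 h3]; dsimp only; exact ⟨by omega, by omega, by omega, by ring⟩
  by_cases h4 : 2*y < 3*x + 2*z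
  · rw [zag4 h1 h2 h3 h4]; dsimp only; exact ⟨by omega, by omega, by omega, by ring⟩
  · rw [zag5 h1 h2 h3 h4]; dsimp only; exact ⟨by omega, by omega, by omega, by ring⟩

private lemma zag_invol {x y z : ℤ} (hx1 : 1 ≤ x) (hy1 : 1 ≤ y) (hz1 : 1 ≤ z)
    (hxo : x % 2 = 1) (hyo : y % 2 = 1) (hzo : z % 2 = 1) :
    zagMap (zagMap (x, y, z)) = (x, y, z) := by
  by_cases h1 : 2*x + 2*z < y
  · rw [zag1 h1, zag2 (x := x + 2*z) (y := z) (z := y - 2*x - 2*z) (by omega) (by omega)]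
    simp only [Prod.mk.injEq, true_and, and_true]; omega
  by_cases h2 : 2*y < x
  · rw [zag2 h1 h2, zag1 (x := x - 2*y) (y := 2*x - 2*y + z) (z := y) (by omega)]
    simp only [Prod.mk.injEq, true_and, and_true]; omega
  by_cases h3 : 2*y < 2*x + z
  · rw [zag3 h1 h2 h3, zag3 (x := 2*y - x) (y := y) (z := 2*x - 2*y + z) (by omega) (by omega) (by omega)]
    simp only [Prod.mk.injEq, true_and, and_true]; omega
  by_cases h4 : 2*y < 3*x + 2*z
  · rw [zag4 h1 h2 h3 h4, zag4 (x := 3*x - 2*y + 2*z) (y := 2*x - y + 2*z) (z := 2*y - 2*x - z) (by omega) (by omega) (by omega) (by omega)]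
    simp only [Prod.mk.injEq, true_and, and_true]; omega
  · rw [zag5 h1 h2 h3 h4, zag5 (x := 2*y - 3*x - 2*z) (y := 2*y - 2*x - z) (z := 2*x - y + 2*z) (by omega) (by omega) (by omega) (by omega)]
    simp only [Prod.mk.injEq, true_and, and_true]; omega

private lemma zag_fix {x y z n : ℤ} (hx1 : 1 ≤ x) (hy1 : 1 ≤ y) (hz1 : 1 ≤ z)
    (hxo : x % 2 = 1) (hyo : y % 2 = 1) (hzo : z % 2 = 1)
    (hq : x ^ 2 + 2 * y * z = n) (hn : n % 8 = 3) :
    zagMap (x, y, z) = (x, y, z) ↔ x = y := by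
  constructor
  · intro hfix
    by_cases h1 : 2*x + 2*z < y
    · rw [zag1 h1] at hfix; simp only [Prod.mk.injEq, true_and, and_true] at hfix; omega
    by_cases h2 : 2*y < x
    · rw [zag2 h1 h2] at hfix; simp only [Prod.mk.injEq, true_and, and_true] at hfix; omega
    by_cases h3 : 2*y < 2*x + z
    · rw [zag3 h1 h2 h3] at hfix; simp only [Prod.mk.injEq, true_and, and_true] at hfix; omega
    by_cases h4 : 2*y < 3*x + 2*z
    · rw [zag4 h1 h2 h3 h4] at hfix; simp only [Prod.mk.injEq, true_and, and_true] at hfix; omega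
    · -- the fixed plane y = 2x + z of the last branch is impossible mod 8
      rw [zag5 h1 h2 h3 h4] at hfix; simp only [Prod.mk.injEq, true_and, and_true] at hfix
      exfalso
      have hy2 : y = 2 * x + z := by omega
      have hxz : (x * z) % 2 = 1 :=
        Int.odd_iff.mp (Int.odd_mul.mpr ⟨Int.odd_iff.mpr hxo, Int.odd_iff.mpr hzo⟩)
      obtain ⟨m, hm⟩ : ∃ m, x * z = 2 * m + 1 := ⟨x * z / 2, by omega⟩
      obtain ⟨t, ht⟩ : ∃ t, x ^ 2 = 8 * t + 1 :=
        ⟨x ^ 2 / 8, by have := odd_sq_mod_eight hxo; omega⟩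
      obtain ⟨s, hs⟩ : ∃ s, z ^ 2 = 8 * s + 1 :=
        ⟨z ^ 2 / 8, by have := odd_sq_mod_eight hzo; omega⟩
      have h7 : n = (8 * t + 1) + 4 * (2 * m + 1) + 2 * (8 * s + 1) := by
        linear_combination -hq + 2 * z * hy2 + ht + 4 * hm + 2 * hs
      omega
  · intro hxy
    rw [zag3 (x := x) (y := y) (z := z) (by omega) (by omega) (by omega)]
    simp only [Prod.mk.injEq, true_and, and_true]
    omega

set_option maxHeartbeats 2000000 in
theorem card_reps_sq_add_two_sq_mod_two (N : ℕ) (hN : 0 < N) (h : N % 8 = 3) :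
    {cd : ℕ × ℕ | 0 < cd.1 ∧ 0 < cd.2 ∧ N = cd.1 ^ 2 + 2 * cd.2 ^ 2}.ncard % 2 =
      N.divisors.card / 2 % 2 := by
  classical
  have hN8 : (N : ℤ) % 8 = 3 := by omega
  -- the solution set of x² + 2yz = N with x, y, z ≥ 1
  set U : Finset (ℤ × ℤ × ℤ) :=
    ((Finset.Icc 1 (N : ℤ)) ×ˢ (Finset.Icc 1 (N : ℤ)) ×ˢ (Finset.Icc 1 (N : ℤ))).filter
      (fun u => u.1 ^ 2 + 2 * u.2.1 * u.2.2 = N) with hUdef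
  have memU : ∀ x y z : ℤ, (x, y, z) ∈ U ↔
      (1 ≤ x ∧ 1 ≤ y ∧ 1 ≤ z ∧ x ^ 2 + 2 * y * z = N) := by
    intro x y z
    simp only [hUdef, Finset.mem_filter, Finset.mem_product, Finset.mem_Icc]
    constructor
    · rintro ⟨⟨⟨hx1, _⟩, ⟨hy1, _⟩, ⟨hz1, _⟩⟩, hq⟩
      exact ⟨hx1, hy1, hz1, hq⟩
    · rintro ⟨hx1, hy1, hz1, hq⟩
      refine ⟨⟨⟨hx1, ?_⟩, ⟨hy1, ?_⟩, ⟨hz1, ?_⟩⟩, hq⟩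
      · nlinarith
      · nlinarith
      · nlinarith
  -- all coordinates of solutions are odd
  have hodd : ∀ x y z : ℤ, (x, y, z) ∈ U → (x % 2 = 1 ∧ y % 2 = 1 ∧ z % 2 = 1) := by
    intro x y z hu
    obtain ⟨hx1, hy1, hz1, hq⟩ := (memU _ _ _).mp hu
    exact odd_coords hq hN8
  have hzag_mem : ∀ u ∈ U, zagMap u ∈ U := by
    rintro ⟨x, y, z⟩ hu
    obtain ⟨hx1, hy1, hz1, hq⟩ := (memU _ _ _).mp hu
    obtain ⟨hxo, hyo, hzo⟩ := hodd x y z hu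
    obtain ⟨g1, g2, g3, g4⟩ := zag_mem hx1 hy1 hz1 hxo hyo hzo
    have : zagMap (x, y, z) =
        ((zagMap (x, y, z)).1, (zagMap (x, y, z)).2.1, (zagMap (x, y, z)).2.2) := rfl
    rw [this, memU]
    exact ⟨g1, g2, g3, by rw [g4]; exact hq⟩
  have hzag_inv : ∀ u ∈ U, zagMap (zagMap u) = u := by
    rintro ⟨x, y, z⟩ hu
    obtain ⟨hx1, hy1, hz1, hq⟩ := (memU _ _ _).mp hu
    obtain ⟨hxo, hyo, hzo⟩ := hodd x y z hu
    exact zag_invol hx1 hy1 hz1 hxo hyo hzo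
  have hzag_fix : ∀ u ∈ U, (zagMap u = u ↔ u.1 = u.2.1) := by
    rintro ⟨x, y, z⟩ hu
    obtain ⟨hx1, hy1, hz1, hq⟩ := (memU _ _ _).mp hu
    obtain ⟨hxo, hyo, hzo⟩ := hodd x y z hu
    exact zag_fix hx1 hy1 hz1 hxo hyo hzo hq hN8
  -- parity: |U| ≡ #divisor pairs (a < b)
  have key1 : U.card % 2 = (U.filter fun u => zagMap u = u).card % 2 :=
    card_filter_parity U zagMap hzag_mem hzag_inv
  -- the swap involution
  set sw : ℤ × ℤ × ℤ → ℤ × ℤ × ℤ := fun u => (u.1, u.2.2, u.2.1) with hswdef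
  have hsw_mem : ∀ u ∈ U, sw u ∈ U := by
    rintro ⟨x, y, z⟩ hu
    obtain ⟨hx1, hy1, hz1, hq⟩ := (memU _ _ _).mp hu
    exact (memU _ _ _).mpr ⟨hx1, hz1, hy1, by linear_combination hq⟩
  have hsw_inv : ∀ u ∈ U, sw (sw u) = u := by rintro ⟨x, y, z⟩ _; rfl
  have key2 : U.card % 2 = (U.filter fun u => sw u = u).card % 2 :=
    card_filter_parity U sw hsw_mem hsw_inv
  -- identify swap fixed points with representations
  set FS : Finset (ℕ × ℕ) :=
    ((Finset.range (N + 1)) ×ˢ (Finset.range (N + 1))).filter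
      (fun cd => 0 < cd.1 ∧ 0 < cd.2 ∧ N = cd.1 ^ 2 + 2 * cd.2 ^ 2) with hFSdef
  have hSet : {cd : ℕ × ℕ | 0 < cd.1 ∧ 0 < cd.2 ∧ N = cd.1 ^ 2 + 2 * cd.2 ^ 2} = ↑FS := by
    ext ⟨c, d⟩
    simp only [Set.mem_setOf_eq, hFSdef, Finset.coe_filter, Finset.mem_coe,
      Finset.mem_product, Finset.mem_range, Set.mem_setOf_eq]
    constructor
    · rintro ⟨hc, hd, he⟩
      refine ⟨⟨?_, ?_⟩, hc, hd, he⟩ <;> nlinarith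
    · rintro ⟨_, hc, hd, he⟩
      exact ⟨hc, hd, he⟩
  have hncard : {cd : ℕ × ℕ | 0 < cd.1 ∧ 0 < cd.2 ∧ N = cd.1 ^ 2 + 2 * cd.2 ^ 2}.ncard
      = FS.card := by rw [hSet, Set.ncard_coe_finset]
  have hFScard : FS.card = (U.filter fun u => sw u = u).card := by
    refine Finset.card_nbij' (fun cd => ((cd.1 : ℤ), (cd.2 : ℤ), (cd.2 : ℤ)))
      (fun u => (u.1.toNat, u.2.1.toNat)) ?_ ?_ ?_ ?_
    · rintro ⟨c, d⟩ hcd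
      simp only [hFSdef, Finset.mem_coe, Finset.mem_filter, Finset.mem_product, Finset.mem_range] at hcd
      obtain ⟨_, hc, hd, he⟩ := hcd
      refine Finset.mem_filter.mpr ⟨(memU _ _ _).mpr ⟨?_, ?_, ?_, ?_⟩, rfl⟩
      · exact_mod_cast hc
      · exact_mod_cast hd
      · exact_mod_cast hd
      · push_cast
        rw [he]; push_cast; ring
    · rintro ⟨x, y, z⟩ hu
      obtain ⟨hu', hfix⟩ := Finset.mem_filter.mp hu
      obtain ⟨hx1, hy1, hz1, hq⟩ := (memU _ _ _).mp hu'
      have hyz : z = y := by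
        have h' := hfix
        simp only [hswdef, Prod.mk.injEq, true_and, and_true] at h'
        exact h'.1
      simp only [hFSdef, Finset.mem_coe, Finset.mem_filter, Finset.mem_product, Finset.mem_range]
      have hxN : x ≤ N := by nlinarith
      have hyN : y ≤ N := by nlinarith
      refine ⟨⟨?_, ?_⟩, ?_, ?_, ?_⟩
      · omega
      · omega
      · omega
      · omega
      · have : ((x.toNat ^ 2 + 2 * y.toNat ^ 2 : ℕ) : ℤ) = (N : ℤ) := by
          push_cast
          rw [Int.toNat_of_nonneg (by omega : (0:ℤ) ≤ x),
            Int.toNat_of_nonneg (by omega : (0:ℤ) ≤ y)]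
          rw [← hq, hyz]; ring
        exact_mod_cast this.symm
    · rintro ⟨c, d⟩ hcd
      show ((c:ℤ).toNat, (d:ℤ).toNat) = (c, d)
      simp
    · rintro ⟨x, y, z⟩ hu
      obtain ⟨hu', hfix⟩ := Finset.mem_filter.mp hu
      obtain ⟨hx1, hy1, hz1, hq⟩ := (memU _ _ _).mp hu'
      have hyz : z = y := by
        have h' := hfix
        simp only [hswdef, Prod.mk.injEq, true_and, and_true] at h'
        exact h'.1
      show ((x.toNat : ℤ), (y.toNat : ℤ), (y.toNat : ℤ)) = (x, y, z)
      simp only [Prod.mk.injEq]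
      refine ⟨Int.toNat_of_nonneg (by omega), ?_, ?_⟩
      · rw [Int.toNat_of_nonneg (by omega)]
      · rw [Int.toNat_of_nonneg (by omega : (0:ℤ) ≤ y), hyz]
  -- identify zag fixed points with small divisors
  have hfix_eq : (U.filter fun u => zagMap u = u) = (U.filter fun u => u.1 = u.2.1) := by
    apply Finset.filter_congr
    intro u hu
    exact hzag_fix u hu
  have hKcard : (U.filter fun u => zagMap u = u).card
      = (N.divisors.filter fun d => d * d < N).card := by
    rw [hfix_eq]
    refine Finset.card_nbij' (fun u => u.1.toNat)
      (fun d => ((d : ℤ), (d : ℤ), (((N / d - d : ℕ) : ℤ) / 2))) ?_ ?_ ?_ ?_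
    · rintro ⟨x, y, z⟩ hu
      obtain ⟨hu', hfix⟩ := Finset.mem_filter.mp hu
      obtain ⟨hx1, hy1, hz1, hq⟩ := (memU _ _ _).mp hu'
      have hxy : y = x := by simpa using hfix.symm
      simp only [Finset.mem_coe, Finset.mem_filter, Nat.mem_divisors]
      have hdvd : (x.toNat : ℤ) ∣ (N : ℤ) := by
        rw [Int.toNat_of_nonneg (by omega : (0:ℤ) ≤ x)]
        exact ⟨x + 2 * z, by rw [← hq, hxy]; ring⟩
      refine ⟨⟨?_, by omega⟩, ?_⟩
      · exact_mod_cast hdvd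
      · have : (x.toNat : ℤ) * (x.toNat : ℤ) < (N : ℤ) := by
          rw [Int.toNat_of_nonneg (by omega : (0:ℤ) ≤ x), ← hq, hxy]
          nlinarith
        exact_mod_cast this
    · intro d hd
      simp only [Finset.mem_coe, Finset.mem_filter, Nat.mem_divisors] at hd
      obtain ⟨⟨hdvd, hN0⟩, hdsq⟩ := hd
      obtain ⟨m, hm⟩ := hdvd
      have hd0 : 0 < d := by
        rcases Nat.eq_zero_or_pos d with h0 | h0
        · exfalso; rw [h0] at hm; simp at hm; omega
        · exact h0
      have hdodd : d % 2 = 1 := by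
        rcases Nat.even_or_odd d with he | ho
        · exfalso
          obtain ⟨k, hk⟩ := he
          have : N = 2 * (k * m) := by rw [hm, hk]; ring
          omega
        · exact Nat.odd_iff.mp ho
      have hmodd : m % 2 = 1 := by
        rcases Nat.even_or_odd m with he | ho
        · exfalso
          obtain ⟨k, hk⟩ := he
          have : N = 2 * (d * k) := by rw [hm, hk]; ring
          omega
        · exact Nat.odd_iff.mp ho
      have hdm : d < m := by
        by_contra hc
        push_neg at hc
        have : N ≤ d * d := by
          calc N = d * m := hm
          _ ≤ d * d := Nat.mul_le_mul_left d hc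
        omega
      have hNd : N / d = m := by rw [hm]; exact Nat.mul_div_cancel_left m hd0
      obtain ⟨e, he, he1⟩ : ∃ e, m = d + 2 * e ∧ 1 ≤ e := ⟨(m - d) / 2, by omega, by omega⟩
      have h2e : (N / d - d : ℕ) = 2 * e := by omega
      have hz : (((N / d - d : ℕ) : ℤ)) / 2 = (e : ℤ) := by
        rw [h2e]; push_cast; omega
      have hNcast : (N : ℤ) = (d : ℤ) * ((d : ℤ) + 2 * (e : ℤ)) := by
        have hne : N = d * (d + 2 * e) := by rw [hm, he]
        exact_mod_cast hne
      refine Finset.mem_filter.mpr ⟨(memU _ _ _).mpr ⟨?_, ?_, ?_, ?_⟩, rfl⟩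
      · exact_mod_cast hd0
      · exact_mod_cast hd0
      · rw [hz]; exact_mod_cast he1
      · rw [hz]; linear_combination -hNcast
    · rintro ⟨x, y, z⟩ hu
      obtain ⟨hu', hfix⟩ := Finset.mem_filter.mp hu
      obtain ⟨hx1, hy1, hz1, hq⟩ := (memU _ _ _).mp hu'
      have hxy : x = y := hfix
      set a := x.toNat with ha
      set c := z.toNat with hc
      have hxa : x = (a : ℤ) := (Int.toNat_of_nonneg (by omega : (0:ℤ) ≤ x)).symm
      have hzc : z = (c : ℤ) := (Int.toNat_of_nonneg (by omega : (0:ℤ) ≤ z)).symm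
      have ha0 : 0 < a := by omega
      have hc0 : 0 < c := by omega
      have hNac : N = a * (a + 2 * c) := by
        have : (N : ℤ) = (a : ℤ) * ((a : ℤ) + 2 * (c : ℤ)) := by
          rw [← hq, ← hxy, hxa, hzc]; ring
        exact_mod_cast this
      have hNdiv : N / a = a + 2 * c := by
        rw [hNac]; exact Nat.mul_div_cancel_left _ ha0
      have h2c : (N / a - a : ℕ) = 2 * c := by omega
      show ((a : ℤ), (a : ℤ), (((N / a - a : ℕ) : ℤ)) / 2) = (x, y, z)
      simp only [Prod.mk.injEq]
      refine ⟨hxa.symm, by rw [← hxy, hxa], ?_⟩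
      rw [h2c, hzc]
      push_cast
      omega
    · intro d hd
      show ((d : ℤ)).toNat = d
      simp
  -- the divisor pairing d ↔ N/d shows σ₀(N) = 2 * #{d ∣ N : d² < N}
  have hnsq : ∀ d : ℕ, ¬ d * d = N := by
    intro d hd
    have h8 : d % 8 * (d % 8) % 8 = 3 := by
      rw [← Nat.mul_mod, hd]; omega
    have hlt : d % 8 < 8 := Nat.mod_lt _ (by norm_num)
    set r := d % 8 with hr
    interval_cases r <;> omega
  have hdiv2 : N.divisors.card
      = 2 * (N.divisors.filter fun d => d * d < N).card := by
    have hsplit := Finset.card_filter_add_card_filter_not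
      (s := N.divisors) (p := fun d => d * d < N)
    have hbij : (N.divisors.filter fun d => d * d < N).card
        = (N.divisors.filter fun d => ¬ d * d < N).card := by
      refine Finset.card_nbij' (fun d => N / d) (fun d => N / d) ?_ ?_ ?_ ?_
      · intro d hd
        simp only [Finset.mem_coe, Finset.mem_filter, Nat.mem_divisors] at hd ⊢
        obtain ⟨⟨hdvd, hN0⟩, hdsq⟩ := hd
        obtain ⟨m, hm⟩ := hdvd
        have hd0 : 0 < d := by
          rcases Nat.eq_zero_or_pos d with h0 | h0
          · exfalso; rw [h0] at hm; simp at hm; omega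
          · exact h0
        have hNd : N / d = m := by rw [hm]; exact Nat.mul_div_cancel_left m hd0
        have hdm : d < m := by
          by_contra hc
          push_neg at hc
          have : d * m ≤ d * d := Nat.mul_le_mul_left d hc
          omega
        rw [hNd]
        exact ⟨⟨⟨d, by rw [hm]; ring⟩, hN0⟩, by intro hmm; nlinarith⟩
      · intro d hd
        simp only [Finset.mem_coe, Finset.mem_filter, Nat.mem_divisors] at hd ⊢
        obtain ⟨⟨hdvd, hN0⟩, hdsq⟩ := hd
        obtain ⟨m, hm⟩ := hdvd
        have hd0 : 0 < d := by
          rcases Nat.eq_zero_or_pos d with h0 | h0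
          · exfalso; rw [h0] at hm; simp at hm; omega
          · exact h0
        have hm0 : 0 < m := by
          rcases Nat.eq_zero_or_pos m with h0 | h0
          · exfalso; rw [h0, Nat.mul_zero] at hm; omega
          · exact h0
        have hNd : N / d = m := by rw [hm]; exact Nat.mul_div_cancel_left m hd0
        have hge : N ≤ d * d := by omega
        have hmd : m ≤ d := by
          by_contra hc
          push_neg at hc
          nlinarith
        have hne : m ≠ d := fun hmd' => hnsq d (by rw [hm, hmd'])
        rw [hNd]
        refine ⟨⟨⟨d, by rw [hm]; ring⟩, hN0⟩, ?_⟩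
        have hlt : m < d := by omega
        have h1 : (m + 1) * m ≤ d * m := Nat.mul_le_mul_right m hlt
        nlinarith
      · intro d hd
        simp only [Finset.mem_coe, Finset.mem_filter, Nat.mem_divisors] at hd
        exact Nat.div_div_self hd.1.1 hd.1.2
      · intro d hd
        simp only [Finset.mem_coe, Finset.mem_filter, Nat.mem_divisors] at hd
        exact Nat.div_div_self hd.1.1 hd.1.2
    omega
  -- final assembly
  rw [hncard, hFScard, ← key2, key1, hKcard]
  omega
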